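/- Let p ∈ (1,∞), let A ⊆ L(L^p(μ)) be an algebra with isometric automorphism φ_A, and let c_A, v_A, φ_A^∞ be as above on L^p(ν × μ). For a, b ∈ A define Θ_A(ab)(x⊗ξ) = Σ_{n≥1} x(n)δ_n ⊗ φ_A^{n−1}(ab)ξ. Then c_A(a)v_A(b) = Θ_A(ab). Moreover, for any a ∈ A with factorization a = a₀a₁, φ_A^∞(a) − Θ_A(φ_A(a)) equals the operator θ (x⊗ξ) = x(0)δ₀ ⊗ aξ, i.e., the rank-one-in-the-first-coordinate operator (δ₀ ⊗ a₀)(δ₀ ⊗ a₁). -/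
import Mathlib


open MeasureTheory
open scoped ENNReal

/-- With the Fock-type operators on
`L^p(ν × μ) = ℓ^p(ℤ_{≥0}) ⊗_p L^p(μ)` given componentwise by
`(c_A(a)ξ)_0 = 0`, `(c_A(a)ξ)_{n+1} = φ_A^n(a)(ξ_n)`,
`(v_A(b)ξ)_n = φ_A^n(b)(ξ_{n+1})`, `(φ_A^∞(a)ξ)_n = φ_A^n(a)(ξ_n)` and
`(Θ_A(c)ξ)_0 = 0`, `(Θ_A(c)ξ)_{n+1} = φ_A^n(c)(ξ_{n+1})`, one has
`c_A(a)v_A(b) = Θ_A(ab)`; moreover for any `a ∈ A` with factorization `a = a₀a₁`,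
`φ_A^∞(a) − Θ_A(φ_A(a))` is the operator `ξ ↦ x(0)δ₀ ⊗ aξ`, i.e. the rank-one-in-the
first-coordinate operator `(δ₀ ⊗ a₀)(δ₀ ⊗ a₁)`. -/
theorem creation_annihilation_theta_covariance
    {Ω : Type*} [MeasurableSpace Ω] (μ : Measure Ω)
    (p : ℝ≥0∞) [Fact (1 ≤ p)] (hp : 1 < p) (hp' : p ≠ ∞)
    (A : Set (Lp ℂ p μ →L[ℂ] Lp ℂ p μ))
    (hAmul : ∀ a ∈ A, ∀ b ∈ A, a * b ∈ A)
    (φ : (Lp ℂ p μ →L[ℂ] Lp ℂ p μ) → (Lp ℂ p μ →L[ℂ] Lp ℂ p μ))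
    (hφA : ∀ a ∈ A, φ a ∈ A)
    (hφ_mul : ∀ a ∈ A, ∀ b ∈ A, φ (a * b) = φ a * φ b)
    (Φ C V Θ : (Lp ℂ p μ →L[ℂ] Lp ℂ p μ) →
        (lp (fun _ : ℕ => Lp ℂ p μ) p →L[ℂ] lp (fun _ : ℕ => Lp ℂ p μ) p))
    (hΦ : ∀ a ∈ A, ∀ (ξ : lp (fun _ : ℕ => Lp ℂ p μ) p) (n : ℕ),
      (Φ a ξ) n = (φ^[n] a) (ξ n))
    (hCzero : ∀ a ∈ A, ∀ ξ : lp (fun _ : ℕ => Lp ℂ p μ) p, (C a ξ) 0 = 0)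
    (hCsucc : ∀ a ∈ A, ∀ (ξ : lp (fun _ : ℕ => Lp ℂ p μ) p) (n : ℕ),
      (C a ξ) (n + 1) = (φ^[n] a) (ξ n))
    (hVf : ∀ b ∈ A, ∀ (ξ : lp (fun _ : ℕ => Lp ℂ p μ) p) (n : ℕ),
      (V b ξ) n = (φ^[n] b) (ξ (n + 1)))
    (hΘzero : ∀ c ∈ A, ∀ ξ : lp (fun _ : ℕ => Lp ℂ p μ) p, (Θ c ξ) 0 = 0)
    (hΘsucc : ∀ c ∈ A, ∀ (ξ : lp (fun _ : ℕ => Lp ℂ p μ) p) (n : ℕ),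
      (Θ c ξ) (n + 1) = (φ^[n] c) (ξ (n + 1))) :
    -- `c_A(a) v_A(b) = Θ_A(ab)`
    (∀ a ∈ A, ∀ b ∈ A, C a ∘L V b = Θ (a * b)) ∧
    -- `φ_A^∞(a) − Θ_A(φ_A(a))` is the rank-one-in-the-first-coordinate operator
    (∀ a₀ ∈ A, ∀ a₁ ∈ A,
      ∀ D : lp (fun _ : ℕ => Lp ℂ p μ) p →L[ℂ] lp (fun _ : ℕ => Lp ℂ p μ) p,
        (∀ ξ : lp (fun _ : ℕ => Lp ℂ p μ) p,
          (D ξ) 0 = a₀ (a₁ (ξ 0)) ∧ ∀ n : ℕ, (D ξ) (n + 1) = 0) →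
        Φ (a₀ * a₁) - Θ (φ (a₀ * a₁)) = D) := by
  -- auxiliary facts about iterates of φ on A
  have hmem : ∀ n : ℕ, ∀ a ∈ A, φ^[n] a ∈ A := by
    intro n
    induction n with
    | zero => intro a ha; simpa using ha
    | succ n ih =>
      intro a ha
      rw [Function.iterate_succ_apply]
      exact ih _ (hφA a ha)
  have hiter_mul : ∀ n : ℕ, ∀ a ∈ A, ∀ b ∈ A,
      φ^[n] (a * b) = φ^[n] a * φ^[n] b := by
    intro n
    induction n with
    | zero => intro a _ b _; simp
    | succ n ih =>
      intro a ha b hb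
      rw [Function.iterate_succ_apply, Function.iterate_succ_apply,
        Function.iterate_succ_apply, hφ_mul a ha b hb]
      exact ih _ (hφA a ha) _ (hφA b hb)
  constructor
  · intro a ha b hb
    refine ContinuousLinearMap.ext fun ξ => lp.ext (funext fun n => ?_)
    cases n with
    | zero =>
      simp only [ContinuousLinearMap.comp_apply]
      rw [hCzero a ha, hΘzero _ (hAmul a ha b hb)]
    | succ n =>
      simp only [ContinuousLinearMap.comp_apply]
      rw [hCsucc a ha, hVf b hb, hΘsucc _ (hAmul a ha b hb),
        hiter_mul n a ha b hb]
      rfl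
  · intro a₀ ha₀ a₁ ha₁ D hD
    have hab : a₀ * a₁ ∈ A := hAmul a₀ ha₀ a₁ ha₁
    refine ContinuousLinearMap.ext fun ξ => lp.ext (funext fun n => ?_)
    have hsub : ((Φ (a₀ * a₁) - Θ (φ (a₀ * a₁))) ξ) n
        = (Φ (a₀ * a₁) ξ) n - (Θ (φ (a₀ * a₁)) ξ) n := by
      rw [ContinuousLinearMap.sub_apply]
      rw [lp.coeFn_sub]; rfl
    cases n with
    | zero =>
      rw [hsub, hΦ _ hab, hΘzero _ (hφA _ hab), (hD ξ).1]
      simp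
    | succ n =>
      rw [hsub, hΦ _ hab, hΘsucc _ (hφA _ hab), (hD ξ).2 n,
        Function.iterate_succ_apply]
      simp
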